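/- Let G be a discrete amenable group and p ∈ [1,∞). Then for every finitely supported f : G → ℂ, ‖λ_p(f)‖ ≥ |Σ_{t∈G} f(t)|, i.e. the trivial character is dominated by the left regular representation norm. -/

import Mathlib

open scoped ENNReal ComplexOrder
open Filter Topology

/-- `lam` is the left regular representation: `lam s` sends `δ_t` to `δ_{s t}`. -/
def IsLeftReg {G : Type*} [Group G] [DecidableEq G] {p : ℝ≥0∞} [Fact (1 ≤ p)]
    (lam : G → (lp (fun _ : G => ℂ) p →L[ℂ] lp (fun _ : G => ℂ) p)) : Prop :=
  ∀ s t : G, lam s (lp.single (E := fun _ : G => ℂ) p t 1) =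
    lp.single (E := fun _ : G => ℂ) p (s * t) 1

/-- `rho` is the right regular representation: `rho s` sends `δ_t` to `δ_{t s⁻¹}`. -/
def IsRightReg {G : Type*} [Group G] [DecidableEq G] {p : ℝ≥0∞} [Fact (1 ≤ p)]
    (rho : G → (lp (fun _ : G => ℂ) p →L[ℂ] lp (fun _ : G => ℂ) p)) : Prop :=
  ∀ s t : G, rho s (lp.single (E := fun _ : G => ℂ) p t 1) =
    lp.single (E := fun _ : G => ℂ) p (t * s⁻¹) 1

/-- Extension of a representation to finitely supported functions: `opOf lam f = Σ_s f(s) • lam s`. -/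
noncomputable def opOf {G : Type*} [Group G] {p : ℝ≥0∞} [Fact (1 ≤ p)]
    (lam : G → (lp (fun _ : G => ℂ) p →L[ℂ] lp (fun _ : G => ℂ) p)) (f : G →₀ ℂ) :
    lp (fun _ : G => ℂ) p →L[ℂ] lp (fun _ : G => ℂ) p :=
  f.sum fun s c => c • lam s

/-- A vector in `ℓ^p(G)` is nonnegative if all its coordinates are nonnegative reals. -/
def IsNonneg {G : Type*} {p : ℝ≥0∞} [Fact (1 ≤ p)] (ξ : lp (fun _ : G => ℂ) p) : Prop :=
  ∀ t : G, 0 ≤ ξ t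

theorem stmt6 {G : Type u} [Group G] [DecidableEq G] {p : ℝ≥0∞} [Fact (1 ≤ p)] (hp : p ≠ ⊤)
    (lam : G → (lp (fun _ : G => ℂ) p →L[ℂ] lp (fun _ : G => ℂ) p))
    (hlam : IsLeftReg lam)
    (hG : ∃ (ι : Type u) (l : Filter ι) (fα : ι → lp (fun _ : G => ℂ) p), l.NeBot ∧
      (∀ α, IsNonneg (fα α) ∧ ‖fα α‖ = 1) ∧
      ∀ s : G, Tendsto (fun α => ‖lam s (fα α) - fα α‖) l (𝓝 0)) :
    ∀ f : G →₀ ℂ, ‖f.sum fun _ c => c‖ ≤ ‖opOf lam f‖ := by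
  obtain ⟨ι, l, fα, hne, hprop, hconv⟩ := hG
  intro f
  set C := ‖opOf lam f‖ with hC
  have key : ∀ α, ‖f.sum fun _ c => c‖ ≤
      (∑ s ∈ f.support, ‖f s‖ * ‖lam s (fα α) - fα α‖) + C := by
    intro α
    have h1 : ‖f.sum fun _ c => c‖ = ‖(f.sum fun _ c => c) • fα α‖ := by
      rw [norm_smul, (hprop α).2, mul_one]
    have happ : opOf lam f (fα α) = ∑ s ∈ f.support, f s • lam s (fα α) := by
      simp [opOf, Finsupp.sum, ContinuousLinearMap.sum_apply]
    have h2 : (f.sum fun _ c => c) • fα α =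
        (∑ s ∈ f.support, f s • (fα α - lam s (fα α))) + opOf lam f (fα α) := by
      rw [happ, Finsupp.sum, Finset.sum_smul, ← Finset.sum_add_distrib]
      refine Finset.sum_congr rfl fun s _ => ?_
      rw [smul_sub]; abel
    have h3 : ‖∑ s ∈ f.support, f s • (fα α - lam s (fα α))‖ ≤
        ∑ s ∈ f.support, ‖f s‖ * ‖lam s (fα α) - fα α‖ := by
      refine (norm_sum_le _ _).trans (Finset.sum_le_sum fun s _ => ?_)
      rw [norm_smul, norm_sub_rev]
    have h4 : ‖opOf lam f (fα α)‖ ≤ C := by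
      calc ‖opOf lam f (fα α)‖ ≤ C * ‖fα α‖ := (opOf lam f).le_opNorm _
        _ = C := by rw [(hprop α).2, mul_one]
    calc ‖f.sum fun _ c => c‖ = ‖(f.sum fun _ c => c) • fα α‖ := h1
      _ ≤ ‖∑ s ∈ f.support, f s • (fα α - lam s (fα α))‖ + ‖opOf lam f (fα α)‖ := by
          rw [h2]; exact norm_add_le _ _
      _ ≤ _ := add_le_add h3 h4
  have hlim : Tendsto (fun α => (∑ s ∈ f.support, ‖f s‖ * ‖lam s (fα α) - fα α‖) + C)
      l (𝓝 (0 + C)) := by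
    refine Tendsto.add ?_ tendsto_const_nhds
    have : Tendsto (fun α => ∑ s ∈ f.support, ‖f s‖ * ‖lam s (fα α) - fα α‖) l
        (𝓝 (∑ s ∈ f.support, ‖f s‖ * 0)) := by
      exact tendsto_finset_sum _ fun s _ => (hconv s).const_mul _
    simpa using this
  rw [zero_add] at hlim
  exact ge_of_tendsto' hlim key
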